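/- Let f: ℝⁿ → (−∞, +∞] be a proper closed convex level-bounded function with Λ := Argmin f ≠ ∅, and set f̲ := inf f. Suppose f satisfies the KL property with exponent α ∈ [0,1) at every point of Λ. Then there exist ε > 0, r₀ > 0 and c₀ > 0 such that dist(x, Λ) ≤ c₀ (f(x) − f̲)^{1−α} for every x ∈ dom ∂f satisfying dist(x, Λ) ≤ ε and f̲ ≤ f(x) < f̲ + r₀. -/

import Mathlib

open Set Filter Topology Metric Bornology RealInnerProductSpace
open scoped Classical

noncomputable section

abbrev Euc (n : ℕ) : Type := EuclideanSpace ℝ (Fin n)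

/-- Convex subdifferential of a real-valued function on an inner product space. -/
def ConvexSubdiff {H : Type*} [NormedAddCommGroup H] [InnerProductSpace ℝ H]
    (P : H → ℝ) (x : H) : Set H :=
  {ζ | ∀ y, ⟪ζ, y - x⟫ ≤ P y - P x}

/-- Regular (Fréchet) subdifferential of an extended-real-valued function. -/
def RegularSubdiff {H : Type*} [NormedAddCommGroup H] [InnerProductSpace ℝ H]
    (h : H → EReal) (x : H) : Set H :=
  {ζ | h x ≠ ⊤ ∧ h x ≠ ⊥ ∧ ∀ ε : ℝ, 0 < ε →
    ∀ᶠ z in 𝓝 x,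
      (((h x).toReal + ⟪ζ, z - x⟫ - ε * ‖z - x‖ : ℝ) : EReal) ≤ h z}

/-- Limiting (Mordukhovich) subdifferential. -/
def LimSubdiff {H : Type*} [NormedAddCommGroup H] [InnerProductSpace ℝ H]
    (h : H → EReal) (x : H) : Set H :=
  {ζ | ∃ xs ζs : ℕ → H, (∀ k, ζs k ∈ RegularSubdiff h (xs k)) ∧
    Tendsto xs atTop (𝓝 x) ∧ Tendsto (fun k => h (xs k)) atTop (𝓝 (h x)) ∧
    Tendsto ζs atTop (𝓝 ζ)}

/-- The Kurdyka–Łojasiewicz property with exponent `α` at a point. -/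
def KLExpAt {H : Type*} [NormedAddCommGroup H] [InnerProductSpace ℝ H]
    (h : H → EReal) (α : ℝ) (xhat : H) : Prop :=
  ∃ a₀ : ℝ, 0 < a₀ ∧ ∃ a : ℝ, 0 < a ∧ ∃ V ∈ 𝓝 xhat, ∀ x ∈ V,
    h xhat < h x → h x < h xhat + (a : EReal) →
    1 ≤ a₀ * (1 - α) * ((h x).toReal - (h xhat).toReal) ^ (-α) *
        infDist 0 (LimSubdiff h x)

/-- The general Kurdyka–Łojasiewicz property at a point. -/
def KLAt {H : Type*} [NormedAddCommGroup H] [InnerProductSpace ℝ H]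
    (h : H → EReal) (xhat : H) : Prop :=
  ∃ a : ℝ, 0 < a ∧ ∃ V ∈ 𝓝 xhat, ∃ φ φ' : ℝ → ℝ,
    φ 0 = 0 ∧ ContinuousOn φ (Ico 0 a) ∧ ConcaveOn ℝ (Ico 0 a) φ ∧
    (∀ s ∈ Ioo 0 a, HasDerivAt φ (φ' s) s ∧ 0 < φ' s) ∧
    ∀ x ∈ V, h xhat < h x → h x < h xhat + (a : EReal) →
      1 ≤ φ' ((h x).toReal - (h xhat).toReal) * infDist 0 (LimSubdiff h x)

/-- The extended objective of problem (P). -/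
def Fobj {n m : ℕ} (f P1 P2 : Euc n → ℝ) (g : Fin m → Euc n → ℝ) (x : Euc n) : EReal :=
  if ∀ i, g i x ≤ 0 then ((f x + P1 x - P2 x : ℝ) : EReal) else ⊤

/-- The moving balls constraint functions. -/
def barG {n m : ℕ} (g : Fin m → Euc n → ℝ) (g' : Fin m → Euc n → Euc n)
    (x y : Euc n) (w : EuclideanSpace ℝ (Fin m)) (i : Fin m) : ℝ :=
  g i y + ⟪g' i y, x - y⟫ + w i / 2 * ‖x - y‖ ^ 2

/-- The space `ℝⁿ × ℝⁿ × ℝᵐ` with the (L²) Euclidean inner product. -/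
abbrev PS (n m : ℕ) : Type :=
  WithLp 2 (Euc n × WithLp 2 (Euc n × EuclideanSpace ℝ (Fin m)))

/-- The potential function `bar F`. -/
def barF {n m : ℕ} (f P1 P2 : Euc n → ℝ) (g : Fin m → Euc n → ℝ)
    (g' : Fin m → Euc n → Euc n)
    (p : PS n m) : EReal :=
  if ∀ i, barG g g' p.ofLp.1 p.ofLp.2.ofLp.1 p.ofLp.2.ofLp.2 i ≤ 0 then
    ((f p.ofLp.1 + P1 p.ofLp.1 - P2 p.ofLp.1 : ℝ) : EReal) else ⊤

/-- Stationary points of problem (P). -/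
def IsStationaryPt {n m : ℕ} (f P1 P2 : Euc n → ℝ) (f' : Euc n → Euc n)
    (g : Fin m → Euc n → ℝ) (g' : Fin m → Euc n → Euc n) (x : Euc n) : Prop :=
  (∀ i, g i x ≤ 0) ∧ ∃ lam : Fin m → ℝ, (∀ i, 0 ≤ lam i) ∧
    (∀ i, lam i * g i x = 0) ∧
    ∃ u ∈ ConvexSubdiff P1 x, ∃ v ∈ ConvexSubdiff P2 x,
      f' x + u - v + ∑ i, lam i • g' i x = 0

/-- Assumptions A (smoothness, Lipschitz gradients, level-boundedness) and B (MFCQ). -/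
def AssumptionAB {n m : ℕ} (f P1 P2 : Euc n → ℝ) (f' : Euc n → Euc n)
    (g : Fin m → Euc n → ℝ) (g' : Fin m → Euc n → Euc n)
    (Lf : ℝ) (Lg : Fin m → ℝ) : Prop :=
  (∀ x, HasGradientAt f (f' x) x) ∧ LipschitzWith Lf.toNNReal f' ∧
  ConvexOn ℝ univ P1 ∧ Continuous P1 ∧ ConvexOn ℝ univ P2 ∧ Continuous P2 ∧
  (∀ i x, HasGradientAt (g i) (g' i x) x) ∧
  (∀ i, LipschitzWith (Lg i).toNNReal (g' i)) ∧
  {x : Euc n | ∀ i, g i x ≤ 0}.Nonempty ∧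
  (∀ σ : ℝ, IsBounded {x | Fobj f P1 P2 g x ≤ (σ : EReal)}) ∧
  (∀ x : Euc n, (∀ i, g i x ≤ 0) → ∃ d, ∀ i, g i x = 0 → ⟪g' i x, d⟫ < 0)

/-- The sequences generated by the SCP_ls algorithm. -/
structure SCPlsSeq {n m : ℕ} (f P1 P2 : Euc n → ℝ) (f' : Euc n → Euc n)
    (g : Fin m → Euc n → ℝ) (g' : Fin m → Euc n → Euc n)
    (c Llo : ℝ) (x ξ : ℕ → Euc n) (Lfs : ℕ → ℝ)
    (Lgs : ℕ → EuclideanSpace ℝ (Fin m)) : Prop where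
  feas0 : ∀ i, g i (x 0) ≤ 0
  subgrad : ∀ t, ξ t ∈ ConvexSubdiff P2 (x t)
  Lf_lb : ∀ t, Llo ≤ Lfs t
  Lg_lb : ∀ t i, Llo ≤ Lgs t i
  bdd : ∃ M : ℝ, ∀ t, Lfs t ≤ M ∧ ∀ i, Lgs t i ≤ M
  feas_sub : ∀ t i, barG g g' (x (t + 1)) (x t) (Lgs t) i ≤ 0
  min : ∀ t z, (∀ i, barG g g' z (x t) (Lgs t) i ≤ 0) →
    ⟪f' (x t) - ξ t, x (t + 1) - x t⟫ + Lfs t / 2 * ‖x (t + 1) - x t‖ ^ 2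
        + P1 (x (t + 1))
      ≤ ⟪f' (x t) - ξ t, z - x t⟫ + Lfs t / 2 * ‖z - x t‖ ^ 2 + P1 z
  uniq : ∀ t z, (∀ i, barG g g' z (x t) (Lgs t) i ≤ 0) →
    ⟪f' (x t) - ξ t, z - x t⟫ + Lfs t / 2 * ‖z - x t‖ ^ 2 + P1 z
      ≤ ⟪f' (x t) - ξ t, x (t + 1) - x t⟫ + Lfs t / 2 * ‖x (t + 1) - x t‖ ^ 2
        + P1 (x (t + 1)) → z = x (t + 1)
  feas : ∀ t i, g i (x (t + 1)) ≤ 0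
  descent : ∀ t, f (x (t + 1)) + P1 (x (t + 1)) - P2 (x (t + 1)) ≤
    f (x t) + P1 (x t) - P2 (x t) - c / 2 * ‖x (t + 1) - x t‖ ^ 2

/-- Cluster points of a sequence (limits of subsequences). -/
def seqClusterPts {X : Type*} [TopologicalSpace X] (u : ℕ → X) : Set X :=
  {p | ∃ φ : ℕ → ℕ, StrictMono φ ∧ Tendsto (u ∘ φ) atTop (𝓝 p)}

/-- Convex subdifferential of an extended-real-valued function. -/
def ESubdiff {H : Type*} [NormedAddCommGroup H] [InnerProductSpace ℝ H]
    (f : H → EReal) (x : H) : Set H :=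
  {ζ | f x ≠ ⊤ ∧ f x ≠ ⊥ ∧ ∀ y, f x + ((⟪ζ, y - x⟫ : ℝ) : EReal) ≤ f y}

/-- lower semicontinuous functions attain their min on compact sets -/
lemma lsc_exists_min {E : Type*} [MetricSpace E] {K : Set E} (hK : IsCompact K)
    (hne : K.Nonempty) {g : E → EReal} (hg : LowerSemicontinuous g) :
    ∃ u ∈ K, ∀ y ∈ K, g u ≤ g y := by
  have hKcl : IsClosed K := hK.isClosed
  haveI : Nonempty K := hne.to_subtype
  set t : K → Set E := fun y => {x ∈ K | g x ≤ g y} with ht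
  have htcl : ∀ y : K, IsClosed (t y) := by
    intro y
    have : t y = K ∩ g ⁻¹' (Iic (g y)) := rfl
    rw [this]
    exact hKcl.inter (hg.isClosed_preimage _)
  have htne : ∀ y : K, (t y).Nonempty := fun y => ⟨y, y.2, le_rfl⟩
  have htcomp : ∀ y : K, IsCompact (t y) := by
    intro y
    exact hK.of_isClosed_subset (htcl y) (fun z hz => hz.1)
  have hdir : Directed (· ⊇ ·) t := by
    intro y₁ y₂
    rcases le_total (g y₁) (g y₂) with h | h
    · exact ⟨y₁, fun z hz => hz, fun z hz => ⟨hz.1, hz.2.trans h⟩⟩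
    · exact ⟨y₂, fun z hz => ⟨hz.1, hz.2.trans h⟩, fun z hz => hz⟩
  obtain ⟨u, hu⟩ := IsCompact.nonempty_iInter_of_directed_nonempty_isCompact_isClosed
    t hdir htne htcomp htcl
  simp only [Set.mem_iInter] at hu
  exact ⟨u, (hu ⟨hne.some, hne.some_mem⟩).1, fun y hy => (hu ⟨y, hy⟩).2⟩

/-- Bernoulli / concavity tangent inequality for rpow -/
lemma rpow_tangent {p a b : ℝ} (hp0 : 0 < p) (hp1 : p ≤ 1) (hb : 0 ≤ b) (hba : b ≤ a)
    (ha : 0 < a) : p * a ^ (p - 1) * (a - b) ≤ a ^ p - b ^ p := by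
  have ht : b / a ≤ 1 := by rw [div_le_one ha]; exact hba
  have ht0 : 0 ≤ b / a := div_nonneg hb ha.le
  have key : (b / a) ^ p * 1 ^ (1 - p) ≤ p * (b / a) + (1 - p) * 1 :=
    Real.geom_mean_le_arith_mean2_weighted hp0.le (by linarith) ht0 zero_le_one (by ring)
  rw [Real.one_rpow, mul_one, mul_one] at key
  have hbp : b ^ p = (b / a) ^ p * a ^ p := by
    rw [← Real.mul_rpow ht0 ha.le, div_mul_cancel₀]
    exact ha.ne'
  have hap : a ^ (p - 1) * a = a ^ p := by
    rw [Real.rpow_sub_one ha.ne']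
    field_simp
  have hapnn : (0:ℝ) ≤ a ^ p := Real.rpow_nonneg ha.le p
  have h2 : (b/a) ^ p * a ^ p ≤ (p * (b/a) + (1 - p)) * a ^ p := by
    apply mul_le_mul_of_nonneg_right key hapnn
  calc p * a ^ (p - 1) * (a - b) = (1 - (p * (b/a) + (1 - p))) * a ^ p := by
        rw [← hap]; field_simp; ring
    _ ≤ (1 - (b/a)^p) * a^p := by nlinarith [Real.rpow_nonneg ht0 p]
    _ = a ^ p - b ^ p := by rw [hbp]; ring

section Prox
variable {n : ℕ} {f : Euc n → EReal}

lemma prox_exists (hnotbot : ∀ x, f x ≠ ⊥) (hlsc : LowerSemicontinuous f)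
    (hlevel : ∀ σ : ℝ, IsBounded {x : Euc n | f x ≤ ((σ : ℝ) : EReal)})
    {lam : ℝ} (hlam : 0 < lam) (z : Euc n) (hz : f z ≠ ⊤) :
    ∃ u : Euc n, ∀ y, f u + ((‖u - z‖^2/(2*lam) : ℝ) : EReal)
      ≤ f y + ((‖y - z‖^2/(2*lam) : ℝ) : EReal) := by
  set K : Set (Euc n) := {y | f y ≤ f z} with hKdef
  have hKcl : IsClosed K := hlsc.isClosed_preimage (f z)
  have hKb : IsBounded K := by
    have hsub : K ⊆ {x | f x ≤ (((f z).toReal : ℝ) : EReal)} := by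
      intro y hy
      simp only [Set.mem_setOf_eq]
      rw [EReal.coe_toReal hz (hnotbot z)]; exact hy
    exact (hlevel _).subset hsub
  have hKcomp : IsCompact K := isCompact_of_isClosed_isBounded hKcl hKb
  have hKne : K.Nonempty := ⟨z, show f z ≤ f z from le_rfl⟩
  have hglsc : LowerSemicontinuous
      (fun y => f y + ((‖y - z‖^2/(2*lam) : ℝ) : EReal)) := by
    apply LowerSemicontinuous.add' hlsc
    · exact Continuous.lowerSemicontinuous <| continuous_coe_real_ereal.comp (by fun_prop)
    · intro x
      apply EReal.continuousAt_add
      · right; exact EReal.coe_ne_bot _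
      · left; exact hnotbot x
  obtain ⟨u, huK, hu⟩ := lsc_exists_min hKcomp hKne hglsc
  refine ⟨u, fun y => ?_⟩
  by_cases hy : y ∈ K
  · exact hu y hy
  · have h1 : f u + ((‖u - z‖^2/(2*lam) : ℝ) : EReal) ≤ f z := by
      have := hu z (show f z ≤ f z from le_rfl)
      simpa using this
    have h2 : f z < f y := not_le.1 hy
    have h3 : f y ≤ f y + ((‖y - z‖^2/(2*lam) : ℝ) : EReal) := by
      apply le_add_of_nonneg_right
      exact_mod_cast (by positivity : (0:ℝ) ≤ ‖y - z‖^2/(2*lam))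
    exact (h1.trans h2.le).trans h3

lemma prox_props (hnotbot : ∀ x, f x ≠ ⊥)
    (hconv : ∀ x y : Euc n, ∀ t : ℝ, 0 ≤ t → t ≤ 1 →
      f (t • x + (1 - t) • y) ≤ ((t : ℝ) : EReal) * f x + ((1 - t : ℝ) : EReal) * f y)
    {lam : ℝ} (hlam : 0 < lam) {z u : Euc n} (hz : f z ≠ ⊤)
    (hu : ∀ y, f u + ((‖u - z‖^2/(2*lam) : ℝ) : EReal)
      ≤ f y + ((‖y - z‖^2/(2*lam) : ℝ) : EReal)) :
    f u ≠ ⊤ ∧ (f u).toReal + ‖u - z‖^2/(2*lam) ≤ (f z).toReal ∧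
      lam⁻¹ • (z - u) ∈ ESubdiff f u := by
  have h0 : f u + ((‖u - z‖^2/(2*lam) : ℝ) : EReal) ≤ f z := by
    simpa using hu z
  have hutop : f u ≠ ⊤ := by
    intro h
    rw [h, EReal.top_add_coe] at h0
    exact hz (top_le_iff.1 h0)
  have hcu : f u = (((f u).toReal : ℝ) : EReal) := (EReal.coe_toReal hutop (hnotbot u)).symm
  have hcz : f z = (((f z).toReal : ℝ) : EReal) := (EReal.coe_toReal hz (hnotbot z)).symm
  refine ⟨hutop, ?_, hutop, hnotbot u, ?_⟩
  · rw [hcu, hcz, ← EReal.coe_add, EReal.coe_le_coe_iff] at h0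
    exact h0
  · intro y
    by_cases hy : f y = ⊤
    · rw [hy]; exact le_top
    have hcy : f y = (((f y).toReal : ℝ) : EReal) := (EReal.coe_toReal hy (hnotbot y)).symm
    set a := (f u).toReal
    set b := (f y).toReal
    rw [hcu, hcy, ← EReal.coe_add, EReal.coe_le_coe_iff]
    set Q : ℝ := ‖y - u‖^2/(2*lam) with hQ
    set I : ℝ := ⟪u - z, y - u⟫ with hI
    have hQnn : 0 ≤ Q := by positivity
    have key : ∀ t : ℝ, 0 < t → t ≤ 1 → a + ⟪lam⁻¹ • (z - u), y - u⟫ ≤ b + t * Q := by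
      intro t ht0 ht1
      have hspec := hu (u + t • (y - u))
      have hcv := hconv y u t ht0.le ht1
      have hpt : t • y + (1 - t) • u = u + t • (y - u) := by module
      rw [hpt, hcy, hcu, ← EReal.coe_mul, ← EReal.coe_mul, ← EReal.coe_add] at hcv
      have hchain : ((a + ‖u - z‖^2/(2*lam) : ℝ) : EReal)
          ≤ ((t * b + (1 - t) * a + ‖u + t • (y - u) - z‖^2/(2*lam) : ℝ) : EReal) := by
        rw [EReal.coe_add, EReal.coe_add]
        calc ((a:ℝ) : EReal) + ((‖u - z‖^2/(2*lam) : ℝ) : EReal)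
            = f u + ((‖u - z‖^2/(2*lam) : ℝ) : EReal) := by rw [hcu]
          _ ≤ f (u + t • (y - u)) + ((‖u + t • (y - u) - z‖^2/(2*lam) : ℝ) : EReal) := hspec
          _ ≤ ((t * b + (1 - t) * a : ℝ) : EReal)
              + ((‖u + t • (y - u) - z‖^2/(2*lam) : ℝ) : EReal) := by
              exact add_le_add_left hcv _
      rw [EReal.coe_le_coe_iff] at hchain
      have hexp : ‖u + t • (y - u) - z‖^2
          = ‖u - z‖^2 + 2 * (t * I) + t^2 * ‖y - u‖^2 := by
        have h9 : u + t • (y - u) - z = (u - z) + t • (y - u) := by abel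
        rw [hI, h9, norm_add_sq_real, real_inner_smul_right, norm_smul, Real.norm_eq_abs,
          mul_pow, sq_abs]
      have hfrac : (‖u - z‖^2 + 2 * (t * I) + t^2 * ‖y - u‖^2)/(2*lam)
          = ‖u - z‖^2/(2*lam) + t * (I/lam) + t^2 * Q := by
        rw [hQ]; field_simp
      rw [hexp, hfrac] at hchain
      have h2 : t * (a - b) ≤ t * (I/lam + t*Q) := by nlinarith [hchain]
      have h3 : a - b ≤ I/lam + t*Q := (mul_le_mul_iff_right₀ ht0).1 h2
      have hinner : ⟪lam⁻¹ • (z - u), y - u⟫ = lam⁻¹ * ⟪z - u, y - u⟫ :=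
        real_inner_smul_left _ _ _
      have hzu : ⟪z - u, y - u⟫ = - I := by
        rw [hI, show z - u = -(u - z) by abel, inner_neg_left]
      have hIdiv : lam⁻¹ * I = I / lam := by field_simp
      rw [hinner, hzu]
      have : lam⁻¹ * (-I) = -(I/lam) := by field_simp
      linarith [h3, this]
    refine le_of_forall_pos_le_add fun ε hε => ?_
    have ht0 : 0 < min 1 (ε/(Q+1)) := lt_min one_pos (by positivity)
    have ht1 : min 1 (ε/(Q+1)) ≤ 1 := min_le_left _ _
    have hkey := key _ ht0 ht1
    have hQε : min 1 (ε/(Q+1)) * Q ≤ ε := by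
      have h1 : min 1 (ε/(Q+1)) ≤ ε/(Q+1) := min_le_right _ _
      have h2 : min 1 (ε/(Q+1)) * Q ≤ (ε/(Q+1)) * Q := mul_le_mul_of_nonneg_right h1 hQnn
      have h3 : (ε/(Q+1)) * Q ≤ ε := by
        rw [div_mul_eq_mul_div, div_le_iff₀ (by positivity)]
        nlinarith
      linarith
    linarith [hkey]

end Prox

lemma uniform_KL {n : ℕ} {f : Euc n → EReal} {α : ℝ} (hα1 : α < 1)
    (hnotbot : ∀ x, f x ≠ ⊥) {x₀ : Euc n} (hx₀ : ∀ y, f x₀ ≤ f y)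
    {S : Set (Euc n)} (hSdef : S = {y : Euc n | ∀ z, f y ≤ f z})
    (hScomp : IsCompact S)
    (hKL : ∀ xhat ∈ S, ∃ a₀ : ℝ, 0 < a₀ ∧ ∃ a : ℝ, 0 < a ∧ ∃ V ∈ 𝓝 xhat, ∀ x ∈ V,
      f xhat < f x → f x < f xhat + ((a : ℝ) : EReal) →
      1 ≤ a₀ * (1 - α) * ((f x).toReal - (f xhat).toReal) ^ (-α) *
        infDist 0 (ESubdiff f x)) :
    ∃ ε2 : ℝ, 0 < ε2 ∧ ∃ r : ℝ, 0 < r ∧ ∃ A : ℝ, 0 < A ∧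
      ∀ z : Euc n, infDist z S ≤ ε2 → f x₀ < f z →
      f z < f x₀ + ((r : ℝ) : EReal) →
      1 ≤ A * (1 - α) * ((f z).toReal - (f x₀).toReal) ^ (-α) *
        infDist 0 (ESubdiff f z) := by
  subst hSdef
  set S := {y : Euc n | ∀ z, f y ≤ f z} with hSdef
  have hx₀S : x₀ ∈ S := hx₀
  choose a₀ ha₀ a ha V hV hprop using hKL
  have hballs := fun (i : S) => Metric.mem_nhds_iff.1 (hV i.1 i.2)
  choose ρ hρ hball using hballs
  have cover : S ⊆ ⋃ i : S, ball (i : Euc n) (ρ i / 2) := by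
    intro p hp
    exact mem_iUnion.2 ⟨⟨p, hp⟩, by simp [mem_ball, half_pos (hρ ⟨p, hp⟩)]⟩
  obtain ⟨t, ht⟩ := hScomp.elim_finite_subcover _ (fun i => isOpen_ball) cover
  have htne : t.Nonempty := by
    have h := ht hx₀S
    rw [mem_iUnion₂] at h
    obtain ⟨i, hit, -⟩ := h
    exact ⟨i, hit⟩
  refine ⟨t.inf' htne (fun i => ρ i / 2), by
      rw [Finset.lt_inf'_iff]; exact fun i _ => half_pos (hρ i),
    t.inf' htne (fun i => a i.1 i.2), by
      rw [Finset.lt_inf'_iff]; exact fun i hit => ha i.1 i.2,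
    t.sup' htne (fun i => a₀ i.1 i.2), ?_, ?_⟩
  · obtain ⟨i, hit⟩ := htne
    exact lt_of_lt_of_le (ha₀ i.1 i.2) (Finset.le_sup' (fun j : {y : Euc n | ∀ z, f y ≤ f z} => a₀ j.1 j.2) hit)
  · intro z hz h1 h2
    set ε2 := t.inf' htne (fun i => ρ i / 2) with hε2
    set r := t.inf' htne (fun i => a i.1 i.2) with hr
    set A := t.sup' htne (fun i => a₀ i.1 i.2) with hA
    obtain ⟨y, hyS, hyd⟩ := hScomp.exists_infDist_eq_dist ⟨x₀, hx₀S⟩ z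
    have h := ht hyS
    rw [mem_iUnion₂] at h
    obtain ⟨i, hit, hyi⟩ := h
    have hzi : dist z (i : Euc n) < ρ i := by
      have hd1 : dist z y ≤ ε2 := by rw [← hyd]; exact hz
      have hd2 : dist y (i : Euc n) < ρ i / 2 := mem_ball.1 hyi
      have hd3 : ε2 ≤ ρ i / 2 := Finset.inf'_le _ hit
      calc dist z (i : Euc n) ≤ dist z y + dist y (i : Euc n) := dist_triangle _ _ _
        _ < ρ i / 2 + ρ i / 2 := by linarith
        _ = ρ i := by ring
    have hzV : z ∈ V i.1 i.2 := hball i (mem_ball.2 hzi)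
    have hfi : f i.1 = f x₀ := by
      have h1' : f i.1 ≤ f x₀ := by
        exact i.2 x₀
      exact le_antisymm h1' (hx₀ _)
    have h2' : f z < f i.1 + ((a i.1 i.2 : ℝ) : EReal) := by
      rw [hfi]
      refine lt_of_lt_of_le h2 (add_le_add_right ?_ _)
      exact EReal.coe_le_coe_iff.2 (Finset.inf'_le _ hit)
    have hres := hprop i.1 i.2 z hzV (by rw [hfi]; exact h1) h2'
    rw [hfi] at hres
    have hAi : a₀ i.1 i.2 ≤ A := Finset.le_sup' (fun j : {y : Euc n | ∀ z, f y ≤ f z} => a₀ j.1 j.2) hit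
    have hfx₀top : f x₀ ≠ ⊤ := h1.ne_top
    have hfztop : f z ≠ ⊤ := by
      intro hc
      rw [hc] at h2
      have : f x₀ + ((r:ℝ) : EReal) ≠ ⊤ := by
        rw [← EReal.coe_toReal hfx₀top (hnotbot x₀), ← EReal.coe_add]
        exact EReal.coe_ne_top _
      exact (lt_irrefl _ (h2.trans_le le_top)).elim
    have hbase : 0 ≤ (f z).toReal - (f x₀).toReal := by
      have := EReal.toReal_le_toReal (hx₀ z) (hnotbot x₀) hfztop
      linarith
    have hP : 0 ≤ ((f z).toReal - (f x₀).toReal) ^ (-α) := Real.rpow_nonneg hbase _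
    have hD : 0 ≤ infDist 0 (ESubdiff f z) := infDist_nonneg
    refine hres.trans ?_
    have h1a : (0:ℝ) ≤ 1 - α := by linarith
    have step1 : a₀ i.1 i.2 * (1 - α) ≤ A * (1 - α) :=
      mul_le_mul_of_nonneg_right hAi h1a
    exact mul_le_mul_of_nonneg_right
      (mul_le_mul_of_nonneg_right step1 hP) hD

set_option maxHeartbeats 2000000 in
theorem stmt10' {n : ℕ} (f : Euc n → EReal) (α : ℝ) (hα0 : 0 ≤ α) (hα1 : α < 1)
    (hproper : ∃ x, f x ≠ ⊤) (hnotbot : ∀ x, f x ≠ ⊥)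
    (hlsc : LowerSemicontinuous f)
    (hconv : ∀ x y : Euc n, ∀ t : ℝ, 0 ≤ t → t ≤ 1 →
      f (t • x + (1 - t) • y) ≤ ((t : ℝ) : EReal) * f x + ((1 - t : ℝ) : EReal) * f y)
    (hlevel : ∀ σ : ℝ, IsBounded {x | f x ≤ ((σ : ℝ) : EReal)})
    (x₀ : Euc n) (hx₀ : ∀ y, f x₀ ≤ f y)
    (hKL : ∀ xhat ∈ {x : Euc n | ∀ y, f x ≤ f y},
      ∃ a₀ : ℝ, 0 < a₀ ∧ ∃ a : ℝ, 0 < a ∧ ∃ V ∈ 𝓝 xhat, ∀ x ∈ V,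
        f xhat < f x → f x < f xhat + ((a : ℝ) : EReal) →
        1 ≤ a₀ * (1 - α) * ((f x).toReal - (f xhat).toReal) ^ (-α) *
          infDist 0 (ESubdiff f x)) :
    ∃ ε : ℝ, 0 < ε ∧ ∃ r₀ : ℝ, 0 < r₀ ∧ ∃ c₀ : ℝ, 0 < c₀ ∧
      ∀ x : Euc n, (ESubdiff f x).Nonempty →
        infDist x {y : Euc n | ∀ z, f y ≤ f z} ≤ ε →
        f x < f x₀ + ((r₀ : ℝ) : EReal) →
        infDist x {y : Euc n | ∀ z, f y ≤ f z}
          ≤ c₀ * ((f x).toReal - (f x₀).toReal) ^ (1 - α) := by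
  classical
  have hfx₀top : f x₀ ≠ ⊤ := by
    obtain ⟨w, hw⟩ := hproper
    intro hc; exact hw (top_le_iff.1 (hc ▸ hx₀ w))
  set m : ℝ := (f x₀).toReal with hm
  have hfx₀ : f x₀ = ((m : ℝ) : EReal) := (EReal.coe_toReal hfx₀top (hnotbot x₀)).symm
  set S := {y : Euc n | ∀ z, f y ≤ f z} with hSdef
  have hmemS : ∀ y, y ∈ S ↔ f y ≤ f x₀ := fun y =>
    ⟨fun h => h x₀, fun h z => h.trans (hx₀ z)⟩
  have hScl : IsClosed S := by
    have hSeq : S = f ⁻¹' (Iic (f x₀)) := by ext y; exact hmemS y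
    rw [hSeq]; exact hlsc.isClosed_preimage _
  have hSb : IsBounded S := by
    apply (hlevel m).subset
    intro y hy
    simp only [Set.mem_setOf_eq, ← hfx₀]
    exact (hmemS y).1 hy
  have hScomp : IsCompact S := isCompact_of_isClosed_isBounded hScl hSb
  obtain ⟨ε2, hε2, r, hr, A, hA, hUKL⟩ :=
    uniform_KL hα1 hnotbot hx₀ hSdef hScomp hKL
  set β : ℝ := 1 - α with hβ
  have hβ0 : 0 < β := by rw [hβ]; linarith
  have hβ1 : β ≤ 1 := by rw [hβ]; linarith
  set c₀ : ℝ := 2 * Real.sqrt 2 + 2 * A with hc₀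
  have hsqrt2 : 0 < Real.sqrt 2 := Real.sqrt_pos.2 (by norm_num)
  have hc₀pos : 0 < c₀ := by rw [hc₀]; positivity
  set r₀ : ℝ := min r (min 1 ((ε2 / (2 * c₀)) ^ (1/β))) with hr₀
  have hr₀pos : 0 < r₀ :=
    lt_min hr (lt_min one_pos (Real.rpow_pos_of_pos (by positivity) _))
  refine ⟨ε2/2, by positivity, r₀, hr₀pos, c₀, hc₀pos, ?_⟩
  intro x _ hxdist hxval
  have hfxtop : f x ≠ ⊤ := by
    intro hc
    rw [hc, hfx₀, ← EReal.coe_add] at hxval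
    exact absurd hxval (not_lt.2 le_top)
  have hfx : f x = (((f x).toReal : ℝ) : EReal) := (EReal.coe_toReal hfxtop (hnotbot x)).symm
  set s0 : ℝ := (f x).toReal - m with hs0
  have hs0nonneg : 0 ≤ s0 := by
    have h := EReal.toReal_le_toReal (hx₀ x) (hnotbot x₀) hfxtop
    rw [hs0]; rw [hm]; linarith
  have hs0lt : s0 < r₀ := by
    rw [hfx, hfx₀, ← EReal.coe_add, EReal.coe_lt_coe_iff] at hxval
    rw [hs0]; linarith
  rcases eq_or_lt_of_le hs0nonneg with hzero | hs0pos
  · -- trivial case : x is a minimizer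
    have hxS : x ∈ S := by
      rw [hmemS, hfx, hfx₀, EReal.coe_le_coe_iff]
      have : (f x).toReal - m = 0 := hzero.symm ▸ rfl
      linarith [this]
    rw [infDist_zero_of_mem hxS]
    have hb : s0 ^ β = 0 := by rw [← hzero, Real.zero_rpow hβ0.ne']
    rw [show ((f x).toReal - m) ^ β = s0 ^ β from rfl, hb, mul_zero]
  · -- main case : s0 > 0
    clear_value S m c₀ r₀ s0
    set lam : ℝ := s0 ^ (1 - 2*α) with hlamdef
    have hlampos : 0 < lam := Real.rpow_pos_of_pos hs0pos _
    clear_value lam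
    set P : Euc n → Euc n := fun z =>
      if h : ∃ u : Euc n, ∀ y, f u + ((‖u - z‖^2/(2*lam) : ℝ) : EReal)
          ≤ f y + ((‖y - z‖^2/(2*lam) : ℝ) : EReal) then h.choose else z with hP
    have hPspec : ∀ z, f z ≠ ⊤ → ∀ y,
        f (P z) + ((‖P z - z‖^2/(2*lam) : ℝ) : EReal)
          ≤ f y + ((‖y - z‖^2/(2*lam) : ℝ) : EReal) := by
      intro z hz
      have hex := prox_exists hnotbot hlsc hlevel hlampos z hz
      simp only [hP, dif_pos hex]
      exact hex.choose_spec
    set X : ℕ → Euc n := fun k => P^[k] x with hX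
    have hX0 : X 0 = x := rfl
    have hXsucc : ∀ k, X (k+1) = P (X k) := fun k => Function.iterate_succ_apply' P k x
    have hmain : ∀ k, f (X k) ≠ ⊤ := by
      intro k; induction k with
      | zero => exact hfxtop
      | succ k ih =>
        rw [hXsucc k]
        exact (prox_props hnotbot hconv hlampos ih (hPspec _ ih)).1
    have hprop' : ∀ k, (f (X (k+1))).toReal + ‖X (k+1) - X k‖^2/(2*lam) ≤ (f (X k)).toReal
        ∧ lam⁻¹ • (X k - X (k+1)) ∈ ESubdiff f (X (k+1)) := by
      intro k
      have h := prox_props hnotbot hconv hlampos (hmain k) (hPspec (X k) (hmain k))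
      rw [← hXsucc k] at h
      exact ⟨h.2.1, h.2.2⟩
    clear_value P X
    set σ : ℕ → ℝ := fun k => (f (X k)).toReal - m with hσdef
    set Δ : ℕ → ℝ := fun k => ‖X (k+1) - X k‖ with hΔdef
    have hΔnn : ∀ k, 0 ≤ Δ k := fun k => norm_nonneg _
    have hσ0 : σ 0 = s0 := by simp only [hσdef, hX0, hs0]
    clear_value σ Δ
    have hdec : ∀ k, σ (k+1) + Δ k^2/(2*lam) ≤ σ k := by
      intro k; have h := (hprop' k).1; simp only [hσdef, hΔdef]; linarith
    have hσnn : ∀ k, 0 ≤ σ k := by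
      intro k
      have h := EReal.toReal_le_toReal (hx₀ (X k)) (hnotbot x₀) (hmain k)
      simp only [hσdef]; rw [hm]; linarith
    have hσanti : Antitone σ := antitone_nat_of_succ_le (by
      intro k
      have h1 := hdec k
      have h2 : 0 ≤ Δ k^2/(2*lam) := div_nonneg (sq_nonneg _) (by linarith)
      linarith)
    have hcoe : ∀ k, f (X k) = ((m + σ k : ℝ) : EReal) := by
      intro k
      rw [← EReal.coe_toReal (hmain k) (hnotbot _)]
      congr 1
      simp only [hσdef]; ring
    -- window condition, valid for every iterate
    have hval2' : ∀ k, f (X k) < f x₀ + ((r : ℝ) : EReal) := by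
      intro k
      rw [hfx₀, ← EReal.coe_add, hcoe k, EReal.coe_lt_coe_iff]
      have h1 : σ k ≤ σ 0 := hσanti (Nat.zero_le k)
      have h2 : r₀ ≤ r := by rw [hr₀]; exact min_le_left _ _
      rw [hσ0] at h1; linarith
    have hval1' : ∀ k, 0 < σ k → f x₀ < f (X k) := by
      intro k hk
      rw [hfx₀, hcoe k, EReal.coe_lt_coe_iff]; linarith
    have hID : ∀ k, infDist 0 (ESubdiff f (X (k+1))) ≤ Δ k / lam := by
      intro k
      refine (infDist_le_dist_of_mem (hprop' k).2).trans ?_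
      rw [dist_zero_left, norm_smul, Real.norm_eq_abs, abs_inv, abs_of_pos hlampos,
        norm_sub_rev]
      rw [inv_mul_eq_div]
      rw [hΔdef]
    -- minimality transfer : zero subgradient means global min
    have hzeroSub : ∀ k, Δ k = 0 → σ (k+1) ≤ 0 := by
      intro k hk
      have hxx : X k - X (k+1) = 0 := by
        simp only [hΔdef] at hk
        rw [norm_eq_zero, sub_eq_zero] at hk
        rw [hk, sub_self]
      have hζ := (hprop' k).2
      rw [hxx, smul_zero] at hζ
      obtain ⟨-, -, hineq⟩ := hζ
      have hle : f (X (k+1)) ≤ f x₀ := by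
        have h := hineq x₀
        simpa using h
      have h2 := EReal.toReal_le_toReal hle (hnotbot _) hfx₀top
      simp only [hσdef]; rw [hm]; linarith
    set φ : ℝ → ℝ := fun s => A * s ^ β with hφdef
    have hφnn : ∀ s, 0 ≤ s → 0 ≤ φ s := fun s hs =>
      mul_nonneg hA.le (Real.rpow_nonneg hs _)
    have hφmono : ∀ a b : ℝ, 0 ≤ b → b ≤ a → φ b ≤ φ a := fun a b hb hba =>
      mul_le_mul_of_nonneg_left (Real.rpow_le_rpow hb hba hβ0.le) hA.le
    -- the key one-step estimate
    have hstep : ∀ k, infDist (X (k+1)) S ≤ ε2 →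
        Δ (k+1) ≤ Δ k / 2 + (φ (σ (k+1)) - φ (σ (k+2))) := by
      intro k hreg
      have hσ21 : σ (k+2) ≤ σ (k+1) := hσanti (by omega)
      have hφd : 0 ≤ φ (σ (k+1)) - φ (σ (k+2)) := by
        have := hφmono (σ (k+1)) (σ (k+2)) (hσnn _) hσ21
        linarith
      rcases eq_or_lt_of_le (hσnn (k+1)) with hz | hpos
      · -- σ (k+1) = 0 : the next step does not move
        have hΔ0 : Δ (k+1) = 0 := by
          have h1 := hdec (k+1)
          have h2 := hσnn (k+2)
          have h3 : Δ (k+1)^2/(2*lam) ≤ 0 := by rw [← hz] at h1; linarith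
          have h4 : 0 ≤ Δ (k+1)^2/(2*lam) := div_nonneg (sq_nonneg _) (by linarith)
          have h5 : Δ (k+1)^2 = 0 := by
            have h6 := le_antisymm h3 h4
            have : Δ (k+1)^2 = 0 * (2*lam) := by
              rw [← h6]; field_simp
            simpa using this
          exact pow_eq_zero_iff two_ne_zero |>.1 h5
        rw [hΔ0]
        linarith [hΔnn k]
      · -- σ (k+1) > 0
        have hΔkpos : 0 < Δ k := by
          rcases eq_or_lt_of_le (hΔnn k) with h0 | h
          · exact absurd (hzeroSub k h0.symm) (not_le.2 hpos)
          · exact h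
        have hKLres := hUKL (X (k+1)) hreg (hval1' _ hpos) (hval2' _)
        have hbase : (f (X (k+1))).toReal - (f x₀).toReal = σ (k+1) := by
          simp only [hσdef]; rw [hm]
        rw [hbase] at hKLres
        have hcnn : 0 ≤ A * (1-α) * σ (k+1)^(-α) :=
          mul_nonneg (mul_nonneg hA.le (by linarith)) (Real.rpow_nonneg (hσnn _) _)
        have h1 : 1 ≤ A * (1-α) * σ (k+1)^(-α) * (Δ k / lam) :=
          hKLres.trans (mul_le_mul_of_nonneg_left (hID k) hcnn)
        have hK2 : lam ≤ A * (1-α) * σ (k+1)^(-α) * Δ k := by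
          have h2 := mul_le_mul_of_nonneg_right h1 hlampos.le
          rw [one_mul] at h2
          have h3 : A * (1-α) * σ (k+1)^(-α) * (Δ k / lam) * lam
              = A * (1-α) * σ (k+1)^(-α) * Δ k := by field_simp
          linarith [h3 ▸ h2]
        have htan := rpow_tangent hβ0 hβ1 (hσnn (k+2)) hσ21 hpos
        have hβm1 : β - 1 = -α := by rw [hβ]; ring
        rw [hβm1] at htan
        have htan2 : A * ((1-α) * σ (k+1)^(-α) * (σ (k+1) - σ (k+2)))
            ≤ φ (σ (k+1)) - φ (σ (k+2)) := by
          have := mul_le_mul_of_nonneg_left htan hA.le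
          simp only [hφdef]
          rw [hβ] at this ⊢
          nlinarith [this]
        have hgap : Δ (k+1)^2/(2*lam) ≤ σ (k+1) - σ (k+2) := by linarith [hdec (k+1)]
        have hgap2 : 0 ≤ σ (k+1) - σ (k+2) := by linarith
        have hfinal : Δ (k+1)^2 ≤ 2 * Δ k * (φ (σ (k+1)) - φ (σ (k+2))) := by
          have e1 : Δ (k+1)^2 ≤ 2*lam*(σ (k+1) - σ (k+2)) := by
            have := mul_le_mul_of_nonneg_right hgap (by linarith : (0:ℝ) ≤ 2*lam)
            have h3 : Δ (k+1)^2/(2*lam)*(2*lam) = Δ (k+1)^2 := by field_simp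
            nlinarith [this]
          have e2 : 2*lam*(σ (k+1) - σ (k+2))
              ≤ 2*(A * (1-α) * σ (k+1)^(-α) * Δ k)*(σ (k+1) - σ (k+2)) := by
            nlinarith [hK2, hgap2]
          have e3 : 2*(A * (1-α) * σ (k+1)^(-α) * Δ k)*(σ (k+1) - σ (k+2))
              ≤ 2 * Δ k * (φ (σ (k+1)) - φ (σ (k+2))) := by
            have h4 : A * ((1-α) * σ (k+1)^(-α) * (σ (k+1) - σ (k+2)))
                * (2 * Δ k) ≤ (φ (σ (k+1)) - φ (σ (k+2))) * (2 * Δ k) :=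
              mul_le_mul_of_nonneg_right htan2 (by linarith [hΔnn k])
            nlinarith [h4]
          linarith
        by_contra hcon
        push_neg at hcon
        nlinarith [hfinal, sq_nonneg (Δ k / 2 - (φ (σ (k+1)) - φ (σ (k+2)))), hΔnn (k+1),
          hΔkpos, hφd]
    -- distances to iterates are bounded by partial sums
    have hdistL : ∀ N, dist x (X N) ≤ ∑ k ∈ Finset.range N, Δ k := by
      intro N; induction N with
      | zero => simp [hX0]
      | succ N ih =>
        have h1 : dist x (X (N+1)) ≤ dist x (X N) + dist (X N) (X (N+1)) :=
          dist_triangle _ _ _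
        have h2 : dist (X N) (X (N+1)) = Δ N := by
          rw [dist_comm, dist_eq_norm, hΔdef]
        rw [Finset.sum_range_succ]
        linarith
    set D : ℝ := 2 * Δ 0 + 2 * φ (σ 1) with hDdef
    clear_value D
    have hφ1nn : 0 ≤ φ (σ 1) := hφnn _ (hσnn 1)
    have hΔ0le : Δ 0 ≤ Real.sqrt 2 * s0 ^ β := by
      have h1 : Δ 0^2 ≤ 2*lam*s0 := by
        have h2 := hdec 0
        have h3 := hσnn 1
        rw [hσ0] at h2
        have h4 : Δ 0^2/(2*lam) ≤ s0 := by linarith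
        have h5 := mul_le_mul_of_nonneg_right h4 (by linarith : (0:ℝ) ≤ 2*lam)
        have h6 : Δ 0^2/(2*lam)*(2*lam) = Δ 0^2 := by field_simp
        nlinarith [h5]
      have h4 : lam * s0 = (s0 ^ β)^2 := by
        rw [hlamdef, hβ]
        rw [← Real.rpow_natCast (s0 ^ (1-α)) 2, ← Real.rpow_mul hs0nonneg]
        nth_rewrite 2 [← Real.rpow_one s0]
        rw [← Real.rpow_add hs0pos]
        congr 1; ring
      have h5 : (Real.sqrt 2 * s0^β)^2 = 2*lam*s0 := by
        rw [mul_pow, Real.sq_sqrt (by norm_num : (0:ℝ) ≤ 2), ← h4]; ring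
      have h6 : 0 ≤ Real.sqrt 2 * s0^β :=
        mul_nonneg hsqrt2.le (Real.rpow_nonneg hs0nonneg _)
      nlinarith [h1, h5, hΔnn 0, h6]
    have hφs1 : φ (σ 1) ≤ A * s0 ^ β := by
      have h1 := hφmono s0 (σ 1) (hσnn 1) (by rw [← hσ0]; exact hσanti (Nat.zero_le 1))
      calc φ (σ 1) ≤ φ s0 := h1
        _ = A * s0 ^ β := by rw [hφdef]
    have hDle : D ≤ c₀ * s0 ^ β := by
      rw [hDdef, hc₀]; nlinarith [hΔ0le, hφs1]
    have hs0βr : s0 ^ β ≤ r₀ ^ β := Real.rpow_le_rpow hs0nonneg hs0lt.le hβ0.le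
    have hr₀β : c₀ * r₀ ^ β ≤ ε2 / 2 := by
      have h1 : r₀ ≤ (ε2/(2*c₀)) ^ (1/β) := by
        rw [hr₀]; exact le_trans (min_le_right _ _) (min_le_right _ _)
      have h2 : r₀ ^ β ≤ ((ε2/(2*c₀)) ^ (1/β)) ^ β :=
        Real.rpow_le_rpow hr₀pos.le h1 hβ0.le
      have hq : (0:ℝ) ≤ ε2/(2*c₀) := le_of_lt (div_pos hε2 (by linarith))
      have h3 : ((ε2/(2*c₀)) ^ (1/β)) ^ β = ε2/(2*c₀) := by
        rw [← Real.rpow_mul hq, one_div_mul_cancel hβ0.ne', Real.rpow_one]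
      rw [h3] at h2
      have h4 : c₀ * r₀^β ≤ c₀ * (ε2/(2*c₀)) := mul_le_mul_of_nonneg_left h2 hc₀pos.le
      have h5 : c₀ * (ε2/(2*c₀)) = ε2/2 := by field_simp
      linarith
    have hDε : D ≤ ε2/2 := by
      have h1 := mul_le_mul_of_nonneg_left hs0βr hc₀pos.le
      linarith
    have hLD : ∀ N, ∑ k ∈ Finset.range N, Δ k ≤ D := by
      intro N
      induction N using Nat.strong_induction_on with
      | _ N ih =>
        obtain _ | N := N
        · simp only [Finset.range_zero, Finset.sum_empty]
          rw [hDdef]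
          linarith [hΔnn 0, hφ1nn]
        obtain _ | N := N
        · rw [Finset.sum_range_one, hDdef]
          linarith [hΔnn 0, hφ1nn]
        · have hreg : ∀ k, k ≤ N → infDist (X (k+1)) S ≤ ε2 := by
            intro k hk
            have h1 : infDist (X (k+1)) S ≤ infDist x S + dist (X (k+1)) x :=
              infDist_le_infDist_add_dist
            have h2 : dist (X (k+1)) x = dist x (X (k+1)) := dist_comm _ _
            have h3 := hdistL (k+1)
            have h4 := ih (k+1) (by omega)
            linarith [hxdist, hDε]
          have hkey : ∀ k ∈ Finset.range (N+1),
              Δ (k+1) ≤ Δ k / 2 + (φ (σ (k+1)) - φ (σ (k+2))) := by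
            intro k hk
            rw [Finset.mem_range] at hk
            exact hstep k (hreg k (by omega))
          have hL2 : ∑ k ∈ Finset.range (N+2), Δ k
              = (∑ k ∈ Finset.range (N+1), Δ (k+1)) + Δ 0 :=
            Finset.sum_range_succ' Δ (N+1)
          have hsum := Finset.sum_le_sum hkey
          have htele : ∑ k ∈ Finset.range (N+1), (φ (σ (k+1)) - φ (σ (k+2)))
              = φ (σ 1) - φ (σ (N+2)) := by
            have h := Finset.sum_range_sub' (fun k => φ (σ (k+1))) (N+1)
            simpa using h
          have hsplit : ∑ k ∈ Finset.range (N+1), (Δ k / 2 + (φ (σ (k+1)) - φ (σ (k+2))))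
              = (∑ k ∈ Finset.range (N+1), Δ k)/2 + (φ (σ 1) - φ (σ (N+2))) := by
            rw [Finset.sum_add_distrib, htele, ← Finset.sum_div]
          have hLN1 := ih (N+1) (by omega)
          have hφN2 : 0 ≤ φ (σ (N+2)) := hφnn _ (hσnn _)
          rw [hsplit] at hsum
          rw [hL2, hDdef]
          rw [hDdef] at hLN1
          linarith
    have hsummable : Summable Δ := summable_of_sum_range_le hΔnn hLD
    have hcauchy : CauchySeq X := by
      apply cauchySeq_of_summable_dist
      have he : (fun n => dist (X n) (X (n+1))) = Δ := by
        funext n; rw [dist_comm, dist_eq_norm, hΔdef]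
      rw [he]; exact hsummable
    obtain ⟨xl, hxl⟩ := cauchySeq_tendsto_of_complete hcauchy
    have hΔlim : Tendsto Δ atTop (𝓝 0) := hsummable.tendsto_atTop_zero
    have hregAll : ∀ k, infDist (X (k+1)) S ≤ ε2 := by
      intro k
      have h1 : infDist (X (k+1)) S ≤ infDist x S + dist (X (k+1)) x :=
        infDist_le_infDist_add_dist
      have h2 : dist (X (k+1)) x = dist x (X (k+1)) := dist_comm _ _
      linarith [hdistL (k+1), hLD (k+1), hxdist, hDε]
    have hxlS : xl ∈ S := by
      by_contra hcon
      have hgt : ((m:ℝ):EReal) < f xl := by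
        have h0 : ¬ ∀ z, f xl ≤ f z := by rw [hSdef] at hcon; exact hcon
        push_neg at h0
        obtain ⟨z, hz⟩ := h0
        calc ((m:ℝ):EReal) = f x₀ := hfx₀.symm
          _ ≤ f z := hx₀ z
          _ < f xl := hz
      obtain ⟨c, hc1, hc2⟩ := exists_between hgt
      have hcnetop : c ≠ ⊤ := hc2.ne_top
      have hcnebot : c ≠ ⊥ := bot_lt_iff_ne_bot.1 (lt_of_le_of_lt bot_le hc1)
      have hcy : c = ((c.toReal:ℝ):EReal) := (EReal.coe_toReal hcnetop hcnebot).symm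
      have hym : m < c.toReal := by rw [hcy, EReal.coe_lt_coe_iff] at hc1; exact hc1
      have hδpos : 0 < c.toReal - m := by linarith
      have hrpos : 0 < (c.toReal - m)^(-α) := Real.rpow_pos_of_pos hδpos _
      have hcδpos : 0 < A * (1-α) * (c.toReal - m)^(-α) :=
        mul_pos (mul_pos hA (by linarith)) hrpos
      have hev1 : ∀ᶠ z in 𝓝 xl, c < f z := hlsc xl c hc2
      have hev1' : ∀ᶠ N in atTop, c < f (X (N+1)) :=
        (tendsto_add_atTop_nat 1).eventually (hxl.eventually hev1)
      have hκpos : 0 < lam / (A * (1-α) * (c.toReal - m)^(-α)) := div_pos hlampos hcδpos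
      have hev2 : ∀ᶠ N in atTop, Δ N < lam / (A * (1-α) * (c.toReal - m)^(-α)) :=
        hΔlim.eventually (gt_mem_nhds hκpos)
      obtain ⟨N, hvalN, hsmallN⟩ := (hev1'.and hev2).exists
      have hδσ : c.toReal - m ≤ σ (N+1) := by
        rw [hcy, hcoe (N+1), EReal.coe_lt_coe_iff] at hvalN
        linarith
      have hσpos : 0 < σ (N+1) := lt_of_lt_of_le hδpos hδσ
      have hKLres := hUKL (X (N+1)) (hregAll N) (hval1' _ hσpos) (hval2' _)
      have hbase : (f (X (N+1))).toReal - (f x₀).toReal = σ (N+1) := by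
        simp only [hσdef]; rw [hm]
      rw [hbase] at hKLres
      have hmono2 : σ (N+1)^(-α) ≤ (c.toReal - m)^(-α) :=
        Real.rpow_le_rpow_of_nonpos hδpos hδσ (by linarith : -α ≤ 0)
      have hIDN := hID N
      have hIDnn : (0:ℝ) ≤ infDist 0 (ESubdiff f (X (N+1))) := infDist_nonneg
      have h1 : 1 ≤ A * (1-α) * (c.toReal - m)^(-α) * (Δ N / lam) := by
        refine hKLres.trans ?_
        apply mul_le_mul
        · exact mul_le_mul_of_nonneg_left hmono2
            (mul_nonneg hA.le (by linarith : (0:ℝ) ≤ 1-α))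
        · exact hIDN
        · exact hIDnn
        · exact hcδpos.le
      have h2 : A * (1-α) * (c.toReal - m)^(-α) * (Δ N / lam)
          < A * (1-α) * (c.toReal - m)^(-α)
            * ((lam / (A * (1-α) * (c.toReal - m)^(-α))) / lam) := by
        apply mul_lt_mul_of_pos_left _ hcδpos
        gcongr
      have h3 : A * (1-α) * (c.toReal - m)^(-α)
          * ((lam / (A * (1-α) * (c.toReal - m)^(-α))) / lam) = 1 := by
        field_simp
        exact div_self (by linarith)
      rw [h3] at h2
      linarith
    have hdistinf : dist x xl ≤ D := by
      have htt : Tendsto (fun N => dist x (X N)) atTop (𝓝 (dist x xl)) :=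
        Tendsto.dist tendsto_const_nhds hxl
      exact le_of_tendsto htt (Filter.Eventually.of_forall
        fun N => (hdistL N).trans (hLD N))
    calc infDist x S ≤ dist x xl := infDist_le_dist_of_mem hxlS
      _ ≤ D := hdistinf
      _ ≤ c₀ * s0 ^ β := hDle


/-- uniformized KL error bound for a proper closed convex
level-bounded function satisfying the KL property with exponent `α` on its
(nonempty) set of minimizers. -/
theorem stmt10 {n : ℕ} (f : Euc n → EReal) (α : ℝ) (hα0 : 0 ≤ α) (hα1 : α < 1)
    (hproper : ∃ x, f x ≠ ⊤) (hnotbot : ∀ x, f x ≠ ⊥)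
    (hlsc : LowerSemicontinuous f)
    (hconv : ∀ x y : Euc n, ∀ t : ℝ, 0 ≤ t → t ≤ 1 →
      f (t • x + (1 - t) • y) ≤ ((t : ℝ) : EReal) * f x + ((1 - t : ℝ) : EReal) * f y)
    (hlevel : ∀ σ : ℝ, IsBounded {x | f x ≤ ((σ : ℝ) : EReal)})
    (x₀ : Euc n) (hx₀ : ∀ y, f x₀ ≤ f y)
    (hKL : ∀ xhat ∈ {x : Euc n | ∀ y, f x ≤ f y},
      ∃ a₀ : ℝ, 0 < a₀ ∧ ∃ a : ℝ, 0 < a ∧ ∃ V ∈ 𝓝 xhat, ∀ x ∈ V,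
        f xhat < f x → f x < f xhat + ((a : ℝ) : EReal) →
        1 ≤ a₀ * (1 - α) * ((f x).toReal - (f xhat).toReal) ^ (-α) *
          infDist 0 (ESubdiff f x)) :
    ∃ ε : ℝ, 0 < ε ∧ ∃ r₀ : ℝ, 0 < r₀ ∧ ∃ c₀ : ℝ, 0 < c₀ ∧
      ∀ x : Euc n, (ESubdiff f x).Nonempty →
        infDist x {y : Euc n | ∀ z, f y ≤ f z} ≤ ε →
        f x < f x₀ + ((r₀ : ℝ) : EReal) →
        infDist x {y : Euc n | ∀ z, f y ≤ f z}
          ≤ c₀ * ((f x).toReal - (f x₀).toReal) ^ (1 - α) :=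
  stmt10' f α hα0 hα1 hproper hnotbot hlsc hconv hlevel x₀ hx₀ hKL
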